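/- Let H = {j₁<⋯<j_s}, m_j > 0 for j ∈ H, p_j = L - 2Σ_k min(j,k)m_k ≥ 0 with p_{j_s} > 0. Define Ω(m) = (det F) · ∏_{j∈H} (1/m_j)·C(p_j + m_j - 1, m_j - 1), where F_{j,k} = δ_{j,k}p_j + 2min(j,k)m_k and C denotes the binomial coefficient. Then Ω(m) = (L / p_{j_s}) · ∏_{j∈H} C(p_j + m_j - 1, m_j); in particular Ω(m) is a positive integer. -/

import Mathlib

open Matrix Finset

private lemma binom_key (p m : ℕ) (hm : 0 < m) :
    (m : ℚ) * (Nat.choose (p + m - 1) m : ℚ) = (p : ℚ) * (Nat.choose (p + m - 1) (m - 1) : ℚ) := by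
  have h := Nat.choose_succ_right_eq (p + m - 1) (m - 1)
  have hm1 : m - 1 + 1 = m := by omega
  have h2 : p + m - 1 - (m - 1) = p := by omega
  rw [hm1, h2] at h
  have := congrArg (Nat.cast : ℕ → ℚ) h
  push_cast at this
  linarith

/-- the parametric matrix family -/
private def Fm (J M P : ℕ → ℕ) (k : ℕ) : Matrix (Fin (k + 1)) (Fin (k + 1)) ℚ :=
  Matrix.of fun a b =>
    (if a = b then (P (a : ℕ) : ℚ) else 0) +
      2 * ((min (J (a : ℕ)) (J (b : ℕ)) : ℕ) : ℚ) * (M (b : ℕ) : ℚ)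

private lemma det_updateColumn_single (k : ℕ) (B : Matrix (Fin (k + 2)) (Fin (k + 2)) ℚ) :
    (B.updateCol (Fin.last (k + 1)) (fun a => if a = Fin.last (k + 1) then 1 else 0)).det
      = (B.submatrix Fin.castSucc Fin.castSucc).det := by
  rw [det_succ_column _ (Fin.last (k + 1)), Fin.sum_univ_castSucc]
  have h1 : ∀ i : Fin (k + 1),
      (B.updateCol (Fin.last (k + 1)) (fun a => if a = Fin.last (k + 1) then 1 else 0))
        i.castSucc (Fin.last (k + 1)) = 0 := by
    intro i
    rw [updateCol_self]
    simp only [Fin.ext_iff, Fin.coe_castSucc, Fin.val_last]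
    rw [if_neg (by omega)]
  rw [Finset.sum_eq_zero (fun i _ => by rw [h1 i]; ring)]
  rw [updateCol_self]
  simp only [if_pos rfl, zero_add, mul_one]
  have hsign : ((-1 : ℚ)) ^ (((Fin.last (k+1)) : ℕ) + ((Fin.last (k+1)) : ℕ)) = 1 :=
    Even.neg_one_pow ⟨k + 1, by simp⟩
  rw [hsign, one_mul]
  have hmat : (B.updateCol (Fin.last (k + 1))
        (fun a => if a = Fin.last (k + 1) then 1 else 0)).submatrix
        (Fin.last (k + 1)).succAbove (Fin.last (k + 1)).succAbove
      = B.submatrix Fin.castSucc Fin.castSucc := by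
    ext a b
    simp only [submatrix_apply, Fin.succAbove_last]
    exact updateCol_ne (by simp [Fin.ext_iff]; omega)
  rw [hmat]
  simp

private lemma Fm_apply (J M P : ℕ → ℕ) (k : ℕ) (a b : Fin (k + 1)) :
    Fm J M P k a b = (if a = b then (P (a : ℕ) : ℚ) else 0) +
      2 * ((min (J (a : ℕ)) (J (b : ℕ)) : ℕ) : ℚ) * (M (b : ℕ) : ℚ) := rfl

private lemma Fm_submatrix (J M P : ℕ → ℕ) (k : ℕ) :
    (Fm J M P (k + 1)).submatrix Fin.castSucc Fin.castSucc = Fm J M P k := by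
  ext a b
  simp only [submatrix_apply, Fm_apply, Fin.coe_castSucc, Fin.castSucc_inj]

private lemma star (J M P : ℕ → ℕ) (hJ : Monotone J) (hM : ∀ i, 0 < M i) (k : ℕ) :
    (Fm J M P (k + 2)).det
      = ((P (k + 2) : ℚ) + 2 * ((J (k + 2) : ℚ) - (J (k + 1) : ℚ)) * (M (k + 2) : ℚ)) *
          (Fm J M P (k + 1)).det
        + (M (k + 2) : ℚ) / (M (k + 1) : ℚ) * (P (k + 1) : ℚ) *
          ((Fm J M P (k + 1)).det - (P (k + 1) : ℚ) * (Fm J M P k).det) := by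
  have hM1 : (M (k + 1) : ℚ) ≠ 0 := Nat.cast_ne_zero.mpr (hM (k + 1)).ne'
  set A := Fm J M P (k + 2) with hA
  set lst : Fin (k + 3) := Fin.last (k + 2) with hlst
  set sl : Fin (k + 3) := (Fin.last (k + 1)).castSucc with hsl
  have hlstv : (lst : ℕ) = k + 2 := rfl
  have hslv : (sl : ℕ) = k + 1 := rfl
  have hne : lst ≠ sl := by simp [hlst, hsl, Fin.ext_iff]
  set G := A.updateRow lst (A lst + (-1 : ℚ) • A sl) with hG
  have hGdet : G.det = A.det := det_updateRow_add_smul_self A hne (-1)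
  have hGrow : ∀ b, G lst b = A lst b - A sl b := by
    intro b
    rw [hG, updateRow_self]
    simp [sub_eq_add_neg]
  have hGother : ∀ (a : Fin (k + 2)) (b : Fin (k + 3)), G a.castSucc b = A a.castSucc b := by
    intro a b
    rw [hG, updateRow_ne (by simp [hlst, Fin.ext_iff]; omega)]
  -- zero entries in last row
  have hz : ∀ b : Fin (k + 1), G lst ((b.castSucc).castSucc) = 0 := by
    intro b
    rw [hGrow]
    have h1 : min (J (k + 2)) (J (b : ℕ)) = J (b : ℕ) := min_eq_right (hJ (by omega))
    have h2 : min (J (k + 1)) (J (b : ℕ)) = J (b : ℕ) := min_eq_right (hJ (by omega))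
    have e1 : A lst ((b.castSucc).castSucc) =
        2 * (J (b : ℕ) : ℚ) * (M (b : ℕ) : ℚ) := by
      rw [hA, Fm_apply, if_neg (by simp [hlst, Fin.ext_iff]; omega)]
      rw [hlstv, Fin.coe_castSucc, Fin.coe_castSucc, h1, zero_add]
    have e2 : A sl ((b.castSucc).castSucc) =
        2 * (J (b : ℕ) : ℚ) * (M (b : ℕ) : ℚ) := by
      rw [hA, Fm_apply, if_neg (by simp [hsl, Fin.ext_iff]; omega)]
      rw [hslv, Fin.coe_castSucc, Fin.coe_castSucc, h2, zero_add]
    rw [e1, e2, sub_self]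
  -- entry at column sl
  have hGsl : G lst sl = -(P (k + 1) : ℚ) := by
    rw [hGrow]
    have h1 : min (J (k + 2)) (J (k + 1)) = J (k + 1) := min_eq_right (hJ (by omega))
    have e1 : A lst sl = 2 * (J (k + 1) : ℚ) * (M (k + 1) : ℚ) := by
      rw [hA, Fm_apply, if_neg (by simp [hlst, hsl, Fin.ext_iff]), hlstv, hslv, h1, zero_add]
    have e2 : A sl sl = (P (k + 1) : ℚ) + 2 * (J (k + 1) : ℚ) * (M (k + 1) : ℚ) := by
      rw [hA, Fm_apply, if_pos rfl, hslv, min_self]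
    rw [e1, e2]; ring
  -- entry at column lst
  have hGlst : G lst lst =
      (P (k + 2) : ℚ) + 2 * ((J (k + 2) : ℚ) - (J (k + 1) : ℚ)) * (M (k + 2) : ℚ) := by
    rw [hGrow]
    have h1 : min (J (k + 1)) (J (k + 2)) = J (k + 1) := min_eq_left (hJ (by omega))
    have e1 : A lst lst = (P (k + 2) : ℚ) + 2 * (J (k + 2) : ℚ) * (M (k + 2) : ℚ) := by
      rw [hA, Fm_apply, if_pos rfl, hlstv, min_self]
    have e2 : A sl lst = 2 * (J (k + 1) : ℚ) * (M (k + 2) : ℚ) := by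
      rw [hA, Fm_apply, if_neg (by simp [hlst, hsl, Fin.ext_iff]), hslv, hlstv, h1, zero_add]
    rw [e1, e2]; ring
  -- the principal submatrix
  have hsub1 : G.submatrix lst.succAbove lst.succAbove = Fm J M P (k + 1) := by
    have : lst.succAbove = Fin.castSucc := Fin.succAbove_last
    rw [this]
    ext a b
    rw [submatrix_apply, hGother]
    simp only [hA, Fm_apply, Fin.coe_castSucc, Fin.castSucc_inj]
  -- the other submatrix
  have hsub2 : G.submatrix lst.succAbove sl.succAbove
      = (Fm J M P (k + 1)).updateCol (Fin.last (k + 1))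
          (fun a => 2 * (J (a : ℕ) : ℚ) * (M (k + 2) : ℚ)) := by
    have hl : lst.succAbove = Fin.castSucc := Fin.succAbove_last
    ext a c
    rw [submatrix_apply, hl, hGother]
    by_cases hc : c = Fin.last (k + 1)
    · subst hc
      have hsa : sl.succAbove (Fin.last (k + 1)) = lst := by
        rw [hsl, Fin.succAbove_of_le_castSucc _ _ le_rfl, Fin.succ_last]
      rw [hsa, updateCol_self]
      have h1 : min (J (a : ℕ)) (J (k + 2)) = J (a : ℕ) := min_eq_left (hJ (by omega))
      rw [hA, Fm_apply, if_neg (by simp [hlst, Fin.ext_iff]; omega), hlstv,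
        Fin.coe_castSucc, h1, zero_add]
    · have hcv : (c : ℕ) < k + 1 := by
        have := c.isLt; rcases Nat.lt_or_ge (c : ℕ) (k + 1) with h | h
        · exact h
        · exact absurd (Fin.ext (by omega : (c : ℕ) = k + 1)) hc
      have hsa : sl.succAbove c = c.castSucc := by
        apply Fin.succAbove_of_castSucc_lt
        simp only [hsl, Fin.lt_iff_val_lt_val, Fin.coe_castSucc, Fin.val_last]
        exact hcv
      rw [hsa, updateCol_ne hc]
      simp only [hA, Fm_apply, Fin.coe_castSucc, Fin.castSucc_inj]
  -- determinant of the updated-column matrix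
  have hcolv : (fun a : Fin (k + 2) => 2 * (J (a : ℕ) : ℚ) * (M (k + 2) : ℚ))
      = ((M (k + 2) : ℚ) / (M (k + 1) : ℚ)) •
        ((fun a : Fin (k + 2) => (Fm J M P (k + 1)) a (Fin.last (k + 1))) +
          (-(P (k + 1) : ℚ)) • (fun a : Fin (k + 2) =>
            if a = Fin.last (k + 1) then (1 : ℚ) else 0)) := by
    funext a
    simp only [Pi.smul_apply, Pi.add_apply, smul_eq_mul]
    by_cases ha : a = Fin.last (k + 1)
    · subst ha
      rw [Fm_apply, if_pos rfl, if_pos rfl]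
      simp only [Fin.val_last, min_self]
      field_simp
      ring
    · have hav : (a : ℕ) < k + 1 := by
        rcases Nat.lt_or_ge (a : ℕ) (k + 1) with h | h
        · exact h
        · exact absurd (Fin.ext (by have := a.isLt; omega : (a : ℕ) = k + 1)) ha
      rw [Fm_apply, if_neg ha, if_neg ha]
      have h1 : min (J (a : ℕ)) (J (k + 1)) = J (a : ℕ) := min_eq_left (hJ (by omega))
      simp only [Fin.val_last, h1]
      field_simp
      ring
  have hdetN : (G.submatrix lst.succAbove sl.succAbove).det
      = (M (k + 2) : ℚ) / (M (k + 1) : ℚ) *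
          ((Fm J M P (k + 1)).det - (P (k + 1) : ℚ) * (Fm J M P k).det) := by
    rw [hsub2, hcolv, det_updateCol_smul, det_updateCol_add, det_updateCol_smul,
      updateCol_eq_self, det_updateColumn_single, Fm_submatrix]
    ring
  -- expand
  rw [← hGdet, det_succ_row G lst, Fin.sum_univ_castSucc, Fin.sum_univ_castSucc]
  have hz' : (∑ b : Fin (k + 1),
      (-1 : ℚ) ^ ((lst : ℕ) + (((b.castSucc).castSucc : Fin (k + 3)) : ℕ)) *
        G lst ((b.castSucc).castSucc) *
        (G.submatrix lst.succAbove ((b.castSucc).castSucc).succAbove).det) = 0 :=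
    Finset.sum_eq_zero fun b _ => by rw [hz b]; ring
  rw [hz']
  have hcs : ((Fin.last (k + 1)).castSucc : Fin (k + 3)) = sl := rfl
  rw [hcs, hGsl, hGlst, hsub1, hdetN]
  have hsign1 : ((-1 : ℚ)) ^ ((lst : ℕ) + (sl : ℕ)) = -1 := by
    rw [hlstv, hslv]
    exact Odd.neg_one_pow ⟨k + 1, by ring⟩
  have hsign2 : ((-1 : ℚ)) ^ ((lst : ℕ) + (lst : ℕ)) = 1 := by
    rw [hlstv]
    exact Even.neg_one_pow ⟨k + 2, by ring⟩
  rw [hsign1, hsign2]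
  field_simp
  ring

private lemma det_full (J M P : ℕ → ℕ) (hJ : Monotone J) (n : ℕ) (L : ℕ)
    (hrow : ∀ a : Fin (n + 1), ∑ b, Fm J M P n a b = (L : ℚ)) :
    (Fm J M P n).det = (L : ℚ) * ∏ a : Fin n, (P (a : ℕ) : ℚ) := by
  set A := Fm J M P n with hA
  set lst : Fin (n + 1) := Fin.last n with hlst
  set E1 : Matrix (Fin (n + 1)) (Fin (n + 1)) ℚ :=
    Matrix.of fun a b => if b = lst then 1 else if a = b then 1 else 0 with hE1def
  set E2 : Matrix (Fin (n + 1)) (Fin (n + 1)) ℚ :=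
    Matrix.of fun a b =>
      (if a = b then 1 else 0) + (if b = lst ∧ a ≠ lst then -1 else 0) with hE2def
  have htri1 : E1.BlockTriangular id := by
    intro i j hij
    have hij' : (j : ℕ) < (i : ℕ) := Fin.lt_iff_val_lt_val.mp hij
    have h1 : j ≠ lst := by
      rw [hlst]
      exact Fin.ne_last_of_lt (show j < i from hij)
    have h2 : i ≠ j := ne_of_gt hij
    simp [hE1def, h1, h2]
  have htri2 : E2.BlockTriangular id := by
    intro i j hij
    have h1 : ¬(j = lst ∧ i ≠ lst) := by
      rintro ⟨hj, -⟩
      exact Fin.ne_last_of_lt (show j < i from hij) (hlst ▸ hj)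
    have h2 : i ≠ j := ne_of_gt hij
    simp [hE2def, h1, h2]
  have hdet1 : E1.det = 1 := by
    rw [det_of_upperTriangular htri1]
    refine Finset.prod_eq_one fun i _ => ?_
    by_cases hi : i = lst <;> simp [hE1def, hi]
  have hdet2 : E2.det = 1 := by
    rw [det_of_upperTriangular htri2]
    refine Finset.prod_eq_one fun i _ => ?_
    simp [hE2def]
  have hA1 : ∀ a b, (A * E1) a b = if b = lst then (L : ℚ) else A a b := by
    intro a b
    rw [mul_apply]
    by_cases hb : b = lst
    · subst hb
      rw [if_pos rfl, ← hrow a]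
      exact Finset.sum_congr rfl fun c _ => by simp [hE1def]
    · rw [if_neg hb, Finset.sum_eq_single b (fun c _ hc => by simp [hE1def, hb, hc])
        (fun h => absurd (Finset.mem_univ b) h)]
      simp [hE1def, hb]
  have hC2 : ∀ a b, (E2 * (A * E1)) a b
      = (if b = lst then (L : ℚ) else A a b)
        - (if a = lst then 0 else (if b = lst then (L : ℚ) else A lst b)) := by
    intro a b
    rw [mul_apply]
    have hsplit : ∀ c, E2 a c * (A * E1) c b
        = (if a = c then 1 else 0) * (A * E1) c b
          + (if c = lst ∧ a ≠ lst then -1 else 0) * (A * E1) c b := by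
      intro c; rw [hE2def]; simp [add_mul]
    rw [Finset.sum_congr rfl fun c _ => hsplit c, Finset.sum_add_distrib]
    have hs1 : (∑ c, (if a = c then (1 : ℚ) else 0) * (A * E1) c b) = (A * E1) a b := by
      rw [Finset.sum_eq_single a (fun c _ hc => by rw [if_neg (Ne.symm hc), zero_mul])
        (fun h => absurd (Finset.mem_univ a) h), if_pos rfl, one_mul]
    rw [hs1]
    by_cases ha : a = lst
    · rw [if_pos ha]
      rw [Finset.sum_eq_zero fun c _ => by simp [ha]]
      rw [hA1, ha]
      ring
    · rw [if_neg ha]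
      have hs2 : (∑ c, (if c = lst ∧ a ≠ lst then (-1 : ℚ) else 0) * (A * E1) c b)
          = -(A * E1) lst b := by
        rw [Finset.sum_eq_single lst (fun c _ hc => by simp [hc])
          (fun h => absurd (Finset.mem_univ lst) h)]
        simp [ha]
      rw [hs2, hA1, hA1]
      ring
  have hdetC2 : (E2 * (A * E1)).det = A.det := by
    rw [det_mul, det_mul, hdet1, hdet2]
    ring
  rw [← hdetC2, det_succ_column (E2 * (A * E1)) lst, Fin.sum_univ_castSucc]
  have hz : (∑ i : Fin n,
      (-1 : ℚ) ^ ((i.castSucc : ℕ) + (lst : ℕ)) * (E2 * (A * E1)) i.castSucc lst *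
        ((E2 * (A * E1)).submatrix i.castSucc.succAbove lst.succAbove).det) = 0 := by
    refine Finset.sum_eq_zero fun i _ => ?_
    have hi : i.castSucc ≠ lst := by rw [hlst]; exact (Fin.castSucc_lt_last i).ne
    rw [hC2, if_pos rfl, if_neg hi, if_pos rfl, sub_self]
    ring
  rw [hz, zero_add]
  have hlv : (E2 * (A * E1)) lst lst = (L : ℚ) := by
    rw [hC2, if_pos rfl, if_pos rfl, sub_zero]
  have hsign : ((-1 : ℚ)) ^ ((lst : ℕ) + (lst : ℕ)) = 1 := by
    rw [hlst]
    exact Even.neg_one_pow ⟨n, by simp⟩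
  rw [hlv, hsign, one_mul]
  have hsub : ((E2 * (A * E1)).submatrix lst.succAbove lst.succAbove).det
      = ∏ a : Fin n, (P (a : ℕ) : ℚ) := by
    have hcs : lst.succAbove = Fin.castSucc := Fin.succAbove_last
    have htri : ((E2 * (A * E1)).submatrix lst.succAbove lst.succAbove).BlockTriangular id := by
      intro a b hab
      have hab' : (b : ℕ) < (a : ℕ) := Fin.lt_iff_val_lt_val.mp hab
      rw [submatrix_apply, hcs, hC2]
      have h1 : (b.castSucc : Fin (n + 1)) ≠ lst := by
        rw [hlst]; exact (Fin.castSucc_lt_last b).ne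
      have h2 : (a.castSucc : Fin (n + 1)) ≠ lst := by
        rw [hlst]; exact (Fin.castSucc_lt_last a).ne
      rw [if_neg h1, if_neg h2, if_neg h1]
      have hmin : min (J (a : ℕ)) (J (b : ℕ)) = J (b : ℕ) := min_eq_right (hJ (by omega))
      have hmin2 : min (J n) (J (b : ℕ)) = J (b : ℕ) :=
        min_eq_right (hJ (by have := b.isLt; omega))
      have e1 : A a.castSucc b.castSucc = 2 * (J (b : ℕ) : ℚ) * (M (b : ℕ) : ℚ) := by
        rw [hA, Fm_apply,
          if_neg (fun h => (ne_of_gt (show b < a from hab)) (Fin.castSucc_inj.mp h)),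
          Fin.coe_castSucc, Fin.coe_castSucc, hmin, zero_add]
      have e2 : A lst b.castSucc = 2 * (J (b : ℕ) : ℚ) * (M (b : ℕ) : ℚ) := by
        rw [hA, Fm_apply, if_neg (fun h => h1 h.symm)]
        rw [hlst]
        simp only [Fin.val_last, Fin.coe_castSucc, hmin2, zero_add]
      rw [e1, e2, sub_self]
    rw [det_of_upperTriangular htri]
    refine Finset.prod_congr rfl fun a _ => ?_
    rw [submatrix_apply, hcs, hC2]
    have h2 : (a.castSucc : Fin (n + 1)) ≠ lst := by
      rw [hlst]; exact (Fin.castSucc_lt_last a).ne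
    rw [if_neg h2, if_neg h2, if_neg h2]
    have hmin2 : min (J n) (J (a : ℕ)) = J (a : ℕ) :=
      min_eq_right (hJ (by have := a.isLt; omega))
    have e1 : A a.castSucc a.castSucc
        = (P (a : ℕ) : ℚ) + 2 * (J (a : ℕ) : ℚ) * (M (a : ℕ) : ℚ) := by
      rw [hA, Fm_apply, if_pos rfl, Fin.coe_castSucc, min_self]
    have e2 : A lst a.castSucc = 2 * (J (a : ℕ) : ℚ) * (M (a : ℕ) : ℚ) := by
      rw [hA, Fm_apply, if_neg (fun h => h2 h.symm)]
      rw [hlst]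
      simp only [Fin.val_last, Fin.coe_castSucc, hmin2, zero_add]
    rw [e1, e2]
    ring
  rw [hsub]

private def eeF (J M P : ℕ → ℕ) : ℕ → ℚ
  | 0 => 2 * (J 0 : ℚ)
  | (k + 1) => ((Fm J M P (k + 1)).det - (P (k + 1) : ℚ) * (Fm J M P k).det) / (M (k + 1) : ℚ)

private lemma Fm_zero_det (J M P : ℕ → ℕ) :
    (Fm J M P 0).det = (P 0 : ℚ) + 2 * (J 0 : ℚ) * (M 0 : ℚ) := by
  rw [det_fin_one, Fm_apply]
  norm_num

private lemma Fm_one_det (J M P : ℕ → ℕ) (hJ : Monotone J) :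
    (Fm J M P 1).det = ((P 0 : ℚ) + 2 * (J 0 : ℚ) * (M 0 : ℚ)) *
        ((P 1 : ℚ) + 2 * (J 1 : ℚ) * (M 1 : ℚ))
      - (2 * (J 0 : ℚ) * (M 1 : ℚ)) * (2 * (J 0 : ℚ) * (M 0 : ℚ)) := by
  rw [det_fin_two]
  have hmin : min (J 0) (J 1) = J 0 := min_eq_left (hJ (by omega))
  have e00 : Fm J M P 1 0 0 = (P 0 : ℚ) + 2 * (J 0 : ℚ) * (M 0 : ℚ) := by
    rw [Fm_apply]; norm_num
  have e11 : Fm J M P 1 1 1 = (P 1 : ℚ) + 2 * (J 1 : ℚ) * (M 1 : ℚ) := by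
    rw [Fm_apply]; norm_num
  have e01 : Fm J M P 1 0 1 = 2 * (J 0 : ℚ) * (M 1 : ℚ) := by
    rw [Fm_apply]
    norm_num [hmin]
  have e10 : Fm J M P 1 1 0 = 2 * (J 0 : ℚ) * (M 0 : ℚ) := by
    rw [Fm_apply]
    norm_num [min_comm (J 0) (J 1) ▸ hmin]
  rw [e00, e11, e01, e10]

private lemma ee_rec (J M P : ℕ → ℕ) (hJ : Monotone J) (hM : ∀ i, 0 < M i) (k : ℕ) :
    eeF J M P (k + 1)
      = 2 * ((J (k + 1) : ℚ) - (J k : ℚ)) * (Fm J M P k).det + (P k : ℚ) * eeF J M P k := by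
  have hMk : (M k : ℚ) ≠ 0 := Nat.cast_ne_zero.mpr (hM k).ne'
  have hMk1 : (M (k + 1) : ℚ) ≠ 0 := Nat.cast_ne_zero.mpr (hM (k + 1)).ne'
  cases k with
  | zero =>
    show ((Fm J M P 1).det - (P 1 : ℚ) * (Fm J M P 0).det) / (M 1 : ℚ)
        = 2 * ((J 1 : ℚ) - (J 0 : ℚ)) * (Fm J M P 0).det + (P 0 : ℚ) * (2 * (J 0 : ℚ))
    rw [Fm_one_det J M P hJ, Fm_zero_det]
    field_simp
    ring
  | succ k =>
    show ((Fm J M P (k + 2)).det - (P (k + 2) : ℚ) * (Fm J M P (k + 1)).det) / (M (k + 2) : ℚ) = _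
    rw [star J M P hJ hM k]
    show _ = _ + (P (k + 1) : ℚ) *
      (((Fm J M P (k + 1)).det - (P (k + 1) : ℚ) * (Fm J M P k).det) / (M (k + 1) : ℚ))
    field_simp
    ring

private lemma chain (J M P : ℕ → ℕ) (hJs : ∀ i, J i < J (i + 1)) (hJ0 : 0 < J 0)
    (hM : ∀ i, 0 < M i) (k : ℕ) :
    ∃ w h : ℕ, 0 < w ∧ 0 < h ∧
      (Fm J M P k).det * ∏ a ∈ Finset.range (k + 1),
          ((1 / (M a : ℚ)) * (Nat.choose (P a + M a - 1) (M a - 1) : ℚ)) = (w : ℚ) ∧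
      eeF J M P k * ∏ a ∈ Finset.range k,
          ((1 / (M a : ℚ)) * (Nat.choose (P a + M a - 1) (M a - 1) : ℚ)) = (h : ℚ) := by
  have hJ : Monotone J := (strictMono_nat_of_lt_succ hJs).monotone
  induction k with
  | zero =>
    refine ⟨Nat.choose (P 0 + M 0 - 1) (M 0) + 2 * J 0 * Nat.choose (P 0 + M 0 - 1) (M 0 - 1),
      2 * J 0, ?_, by omega, ?_, ?_⟩
    · have h1 : 0 < Nat.choose (P 0 + M 0 - 1) (M 0 - 1) :=
        Nat.choose_pos (by have := hM 0; omega)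
      have := hJ0
      positivity
    · rw [Fm_zero_det, Finset.prod_range_one]
      have key := binom_key (P 0) (M 0) (hM 0)
      have hM0 : (M 0 : ℚ) ≠ 0 := Nat.cast_ne_zero.mpr (hM 0).ne'
      push_cast
      field_simp
      linear_combination -key
    · show 2 * (J 0 : ℚ) * ∏ a ∈ Finset.range 0, _ = _
      push_cast
      simp
  | succ k ih =>
    obtain ⟨w, h, hw, hh, hwq, hhq⟩ := ih
    have hMk : (M k : ℚ) ≠ 0 := Nat.cast_ne_zero.mpr (hM k).ne'
    have hMk1 : (M (k + 1) : ℚ) ≠ 0 := Nat.cast_ne_zero.mpr (hM (k + 1)).ne'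
    set CPk : ℚ := (Nat.choose (P k + M k - 1) (M k - 1) : ℚ) with hCPk
    set CPk1 : ℚ := (Nat.choose (P (k + 1) + M (k + 1) - 1) (M (k + 1) - 1) : ℚ) with hCPk1
    set X : ℚ := ∏ a ∈ Finset.range k,
      ((1 / (M a : ℚ)) * (Nat.choose (P a + M a - 1) (M a - 1) : ℚ)) with hX
    have hprod1 : (∏ a ∈ Finset.range (k + 1),
        ((1 / (M a : ℚ)) * (Nat.choose (P a + M a - 1) (M a - 1) : ℚ)))
        = X * ((1 / (M k : ℚ)) * CPk) := Finset.prod_range_succ _ k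
    have hprod2 : (∏ a ∈ Finset.range (k + 2),
        ((1 / (M a : ℚ)) * (Nat.choose (P a + M a - 1) (M a - 1) : ℚ)))
        = (∏ a ∈ Finset.range (k + 1),
            ((1 / (M a : ℚ)) * (Nat.choose (P a + M a - 1) (M a - 1) : ℚ)))
          * ((1 / (M (k + 1) : ℚ)) * CPk1) := Finset.prod_range_succ _ (k + 1)
    have key1 := binom_key (P k) (M k) (hM k)
    have key2 := binom_key (P (k + 1)) (M (k + 1)) (hM (k + 1))
    have hd1 : (Fm J M P (k + 1)).det
        = (P (k + 1) : ℚ) * (Fm J M P k).det + (M (k + 1) : ℚ) * eeF J M P (k + 1) := by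
      show _ = _ + (M (k + 1) : ℚ) *
        (((Fm J M P (k + 1)).det - (P (k + 1) : ℚ) * (Fm J M P k).det) / (M (k + 1) : ℚ))
      field_simp
      ring
    -- eta equation
    have heta : eeF J M P (k + 1) * ∏ a ∈ Finset.range (k + 1),
        ((1 / (M a : ℚ)) * (Nat.choose (P a + M a - 1) (M a - 1) : ℚ))
        = ((2 * (J (k + 1) - J k) * w + Nat.choose (P k + M k - 1) (M k) * h : ℕ) : ℚ) := by
      rw [ee_rec J M P hJ hM k, hprod1]
      rw [hprod1] at hwq
      push_cast [Nat.cast_sub (le_of_lt (hJs k))]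
      have hinv : (M k : ℚ) * ((M k : ℚ))⁻¹ = 1 := mul_inv_cancel₀ hMk
      linear_combination (2 * ((J (k + 1) : ℚ) - (J k : ℚ))) * hwq
        + ((Nat.choose (P k + M k - 1) (M k) : ℚ)) * hhq
        - (eeF J M P k * X * ((M k : ℚ))⁻¹) * key1
        + ((Nat.choose (P k + M k - 1) (M k) : ℚ) * eeF J M P k * X) * hinv
    refine ⟨Nat.choose (P (k + 1) + M (k + 1) - 1) (M (k + 1)) * w
        + Nat.choose (P (k + 1) + M (k + 1) - 1) (M (k + 1) - 1)
          * (2 * (J (k + 1) - J k) * w + Nat.choose (P k + M k - 1) (M k) * h),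
      2 * (J (k + 1) - J k) * w + Nat.choose (P k + M k - 1) (M k) * h, ?_, ?_, ?_, heta⟩
    · have h1 : 0 < Nat.choose (P (k + 1) + M (k + 1) - 1) (M (k + 1) - 1) :=
        Nat.choose_pos (by have := hM (k + 1); omega)
      have h2 : 0 < J (k + 1) - J k := by have := hJs k; omega
      have : 0 < 2 * (J (k + 1) - J k) * w := by positivity
      positivity
    · have h2 : 0 < J (k + 1) - J k := by have := hJs k; omega
      positivity
    · rw [hprod2, hd1]
      push_cast [Nat.cast_sub (le_of_lt (hJs k))]
      push_cast [Nat.cast_sub (le_of_lt (hJs k))] at heta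
      have hinv1 : (M (k + 1) : ℚ) * ((M (k + 1) : ℚ))⁻¹ = 1 := mul_inv_cancel₀ hMk1
      set Y : ℚ := ∏ a ∈ Finset.range (k + 1),
        ((1 / (M a : ℚ)) * (Nat.choose (P a + M a - 1) (M a - 1) : ℚ)) with hY
      linear_combination ((Nat.choose (P (k + 1) + M (k + 1) - 1) (M (k + 1)) : ℚ)) * hwq
        + CPk1 * heta
        - ((Fm J M P k).det * Y * ((M (k + 1) : ℚ))⁻¹) * key2
        + (CPk1 * eeF J M P (k + 1) * Y
            + (Nat.choose (P (k + 1) + M (k + 1) - 1) (M (k + 1)) : ℚ)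
              * (Fm J M P k).det * Y) * hinv1

/-- `Ω(m) = (det F) ∏_j (1/m_j) C(p_j+m_j-1, m_j-1)` equals
`(L/p_{j_s}) ∏_j C(p_j+m_j-1, m_j)`, and is a positive integer
(here `s = n+1`, `j_s` is the last, largest, index). -/
theorem stmt9 (L : ℕ) (hL : 0 < L) (n : ℕ)
    (j : Fin (n + 1) → ℕ) (hj : StrictMono j) (hjpos : ∀ a, 0 < j a)
    (m : Fin (n + 1) → ℕ) (hm : ∀ a, 0 < m a)
    (hconf : 2 * ∑ a, j a * m a < L)
    (pval : Fin (n + 1) → ℕ)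
    (hp : ∀ a, (pval a : ℤ) = (L : ℤ) - 2 * ∑ b, (min (j a) (j b) : ℤ) * (m b : ℤ))
    (F : Matrix (Fin (n + 1)) (Fin (n + 1)) ℤ)
    (hF : ∀ a b, F a b =
      (if a = b then (pval a : ℤ) else 0) + 2 * (min (j a) (j b) : ℤ) * (m b : ℤ))
    (Ω : ℚ)
    (hΩ : Ω = (F.det : ℚ) *
      ∏ a, (1 / (m a : ℚ)) * (Nat.choose (pval a + m a - 1) (m a - 1) : ℚ)) :
    Ω = ((L : ℚ) / (pval (Fin.last n) : ℚ)) *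
        ∏ a, (Nat.choose (pval a + m a - 1) (m a) : ℚ) ∧
      ∃ z : ℕ, 0 < z ∧ Ω = (z : ℚ) := by
  classical
  set J : ℕ → ℕ := fun i => j ⟨min i n, by omega⟩ + (i - n) with hJdef
  set Mf : ℕ → ℕ := fun i => m ⟨min i n, by omega⟩ with hMdef
  set Pf : ℕ → ℕ := fun i => pval ⟨min i n, by omega⟩ with hPdef
  have hmk : ∀ a : Fin (n + 1), (⟨min (a : ℕ) n, by omega⟩ : Fin (n + 1)) = a := by
    intro a
    refine Fin.ext ?_
    have := a.isLt
    simp only []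
    omega
  have hJa : ∀ a : Fin (n + 1), J (a : ℕ) = j a := by
    intro a
    have := a.isLt
    simp only [hJdef, hmk a]
    omega
  have hMa : ∀ a : Fin (n + 1), Mf (a : ℕ) = m a := by
    intro a
    simp only [hMdef, hmk a]
  have hPa : ∀ a : Fin (n + 1), Pf (a : ℕ) = pval a := by
    intro a
    simp only [hPdef, hmk a]
  have hJs : ∀ i, J i < J (i + 1) := by
    intro i
    simp only [hJdef]
    by_cases hi : i < n
    · exact Nat.add_lt_add_of_lt_of_le (hj (Fin.mk_lt_mk.mpr (by omega))) (by omega)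
    · exact Nat.add_lt_add_of_le_of_lt
        (le_of_eq (congrArg j (Fin.mk_eq_mk.mpr (by omega)))) (by omega)
  have hJmono : Monotone J := (strictMono_nat_of_lt_succ hJs).monotone
  have hJ0 : 0 < J 0 := by
    have h := hjpos ⟨min 0 n, by omega⟩
    simp only [hJdef]
    omega
  have hMpos : ∀ i, 0 < Mf i := fun i => hm _
  -- determinant over ℚ
  have hFmap : Fm J Mf Pf n = F.map (fun x : ℤ => (x : ℚ)) := by
    ext a b
    rw [Fm_apply, Matrix.map_apply, hF a b, hJa a, hJa b, hMa b, hPa a]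
    split_ifs with hab <;> push_cast <;> ring
  have hdetQ : (F.det : ℚ) = (Fm J Mf Pf n).det := by
    rw [hFmap]
    have h := RingHom.map_det (Int.castRingHom ℚ) F
    simpa using h
  -- row sums
  have hrow : ∀ a : Fin (n + 1), ∑ b, Fm J Mf Pf n a b = (L : ℚ) := by
    intro a
    have hpq : (pval a : ℚ)
        = (L : ℚ) - 2 * ∑ b, min ((j a : ℚ)) ((j b : ℚ)) * (m b : ℚ) := by
      have h2 := congrArg (fun z : ℤ => (z : ℚ)) (hp a)
      push_cast at h2
      exact h2
    simp only [Fm_apply]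
    rw [Finset.sum_add_distrib]
    have e1 : (∑ b : Fin (n + 1), if a = b then (Pf (a : ℕ) : ℚ) else 0) = (pval a : ℚ) := by
      rw [Finset.sum_ite_eq]
      simp [hPa a]
    have e2 : (∑ b : Fin (n + 1),
        2 * ((min (J (a : ℕ)) (J (b : ℕ)) : ℕ) : ℚ) * (Mf (b : ℕ) : ℚ))
        = 2 * ∑ b, min ((j a : ℚ)) ((j b : ℚ)) * (m b : ℚ) := by
      rw [Finset.mul_sum]
      refine Finset.sum_congr rfl fun b _ => ?_
      rw [hJa a, hJa b, hMa b]
      push_cast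
      ring
    rw [e1, e2, hpq]
    ring
  have hdd : (Fm J Mf Pf n).det = (L : ℚ) * ∏ a : Fin n, (Pf (a : ℕ) : ℚ) :=
    det_full J Mf Pf hJmono n L hrow
  -- p at last index is positive
  have hplast : 0 < pval (Fin.last n) := by
    have h := hp (Fin.last n)
    have hmin : (∑ b, (min ((j (Fin.last n) : ℤ)) ((j b : ℤ))) * (m b : ℤ))
        = ∑ b, (j b : ℤ) * (m b : ℤ) :=
      Finset.sum_congr rfl fun b _ => by
        rw [min_eq_right (by exact_mod_cast hj.monotone (Fin.le_last b))]
    rw [hmin] at h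
    have hc : ((2 * ∑ a, j a * m a : ℕ) : ℤ) < (L : ℤ) := by exact_mod_cast hconf
    push_cast at hc
    have hpos : (0 : ℤ) < (pval (Fin.last n) : ℤ) := by rw [h]; linarith
    exact_mod_cast hpos
  have hplq : (pval (Fin.last n) : ℚ) ≠ 0 := Nat.cast_ne_zero.mpr hplast.ne'
  -- rewrite Ω using the ℕ-indexed product
  have hΩd : Ω = (Fm J Mf Pf n).det * ∏ a ∈ Finset.range (n + 1),
      ((1 / (Mf a : ℚ)) * (Nat.choose (Pf a + Mf a - 1) (Mf a - 1) : ℚ)) := by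
    rw [hΩ, hdetQ]
    congr 1
    rw [← Fin.prod_univ_eq_prod_range
      (fun i => (1 / (Mf i : ℚ)) * (Nat.choose (Pf i + Mf i - 1) (Mf i - 1) : ℚ)) (n + 1)]
    exact Finset.prod_congr rfl fun a _ => by rw [hMa a, hPa a]
  obtain ⟨w, h, hwpos, hhpos, hwq, hhq⟩ := chain J Mf Pf hJs hJ0 hMpos n
  constructor
  · -- the closed formula
    have hper : ∀ a : Fin (n + 1), (Nat.choose (pval a + m a - 1) (m a) : ℚ)
        = (pval a : ℚ) * (Nat.choose (pval a + m a - 1) (m a - 1) : ℚ) / (m a : ℚ) := by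
      intro a
      rw [eq_div_iff (Nat.cast_ne_zero.mpr (hm a).ne')]
      linear_combination binom_key (pval a) (m a) (hm a)
    have hBB : (∏ a : Fin (n + 1), (Nat.choose (pval a + m a - 1) (m a) : ℚ))
        = ((∏ a : Fin (n + 1), (pval a : ℚ)) *
            ∏ a : Fin (n + 1), (Nat.choose (pval a + m a - 1) (m a - 1) : ℚ))
          / ∏ a : Fin (n + 1), (m a : ℚ) := by
      rw [Finset.prod_congr rfl fun a _ => hper a, Finset.prod_div_distrib,
        Finset.prod_mul_distrib]
    have hgg : (∏ a : Fin (n + 1),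
        (1 / (m a : ℚ)) * (Nat.choose (pval a + m a - 1) (m a - 1) : ℚ))
        = (∏ a : Fin (n + 1), (Nat.choose (pval a + m a - 1) (m a - 1) : ℚ))
          / ∏ a : Fin (n + 1), (m a : ℚ) := by
      rw [Finset.prod_mul_distrib, Finset.prod_div_distrib]
      simp [div_eq_mul_inv, mul_comm]
    have hPP : (∏ a : Fin n, (Pf (a : ℕ) : ℚ)) = ∏ a : Fin n, (pval a.castSucc : ℚ) := by
      refine Finset.prod_congr rfl fun a _ => ?_
      have h1 : (⟨min (a : ℕ) n, by omega⟩ : Fin (n + 1)) = a.castSucc := by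
        refine Fin.ext ?_
        have := a.isLt
        simp only [Fin.coe_castSucc]
        omega
      simp only [hPdef, h1]
    have hsplit : (∏ a : Fin (n + 1), (pval a : ℚ))
        = (∏ a : Fin n, (pval a.castSucc : ℚ)) * (pval (Fin.last n) : ℚ) :=
      Fin.prod_univ_castSucc _
    have hMne : (∏ a : Fin (n + 1), (m a : ℚ)) ≠ 0 :=
      Finset.prod_ne_zero_iff.mpr fun a _ => Nat.cast_ne_zero.mpr (hm a).ne'
    rw [hΩ, hdetQ, hdd, hPP, hgg, hBB, hsplit]
    field_simp
  · exact ⟨w, hwpos, by rw [hΩd]; exact hwq⟩
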